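/- Let e₁, …, e_n ∈ ℂⁿ, α₁, …, α_n ∈ (ℂⁿ)*, set r_j := 1 + e_j⊗α_j and u_{jk} := α_j(e_k), and fix i with 1 ≤ i ≤ n−1 such that t_i² := 1 + u_{ii} ≠ 0 (so r_i is invertible). Define e′_k := e_k and α′_k := α_k for k ∉ {i, i+1}, e′_i := r_i⁻¹e_{i+1}, e′_{i+1} := e_i, α′_i := α_{i+1}∘r_i, α′_{i+1} := α_i, and set u′_{jk} := α′_j(e′_k). Then u′_{jk} = u_{jk} whenever j,k ∉ {i,i+1}, and u′_{ii} = u_{i+1,i+1}, u′_{i+1,i+1} = u_{ii}, u′_{i,i+1} = t_i²·u_{i+1,i}, u′_{i+1,i} = u_{i,i+1}/t_i², and for every j ∉ {i,i+1}: u′_{ij} = u_{i+1,j} + u_{i+1,i}u_{ij}, u′_{ji} = u_{j,i+1} − u_{ji}u_{i,i+1}/t_i², u′_{i+1,j} = u_{ij}, u′_{j,i+1} = u_{ji}. -/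

import Mathlib

open Matrix

lemma vecMulVec_mulVec' {n : ℕ} (w v x : Fin n → ℂ) :
    vecMulVec w v *ᵥ x = (v ⬝ᵥ x) • w := by
  funext j
  simp [mulVec, vecMulVec_apply, dotProduct, Finset.mul_sum, mul_comm, mul_left_comm]

lemma vecMul_vecMulVec' {n : ℕ} (x w v : Fin n → ℂ) :
    x ᵥ* vecMulVec w v = (x ⬝ᵥ w) • v := by
  funext j
  simp [vecMul, vecMulVec_apply, dotProduct, Finset.sum_mul, mul_assoc]

lemma vecMulVec_mul' {n : ℕ} (w v w' v' : Fin n → ℂ) :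
    vecMulVec w v * vecMulVec w' v' = (v ⬝ᵥ w') • vecMulVec w v' := by
  ext j k
  simp [Matrix.mul_apply, vecMulVec_apply, dotProduct, Finset.sum_mul, Finset.mul_sum]
  congr 1; funext l; ring

/-- The lifted braid group generator `γᵢ` acting on an `n`-tuple of
pseudo-reflections `rⱼ = 1 + eⱼ⊗αⱼ` induces the stated transformation of the
pairing matrix `u_{jk} = αⱼ(e_k)`.  Here `i, i1` play the roles of `i, i+1`. -/
theorem stmt11 (n : ℕ) (e a e' a' : Fin n → Fin n → ℂ)
    (i i1 : Fin n) (hi : (i1 : ℕ) = (i : ℕ) + 1)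
    (ht : 1 + a i ⬝ᵥ e i ≠ 0)
    (r : Fin n → Matrix (Fin n) (Fin n) ℂ)
    (hr : ∀ j, r j = 1 + vecMulVec (e j) (a j))
    (he' : ∀ k, k ≠ i → k ≠ i1 → e' k = e k)
    (ha' : ∀ k, k ≠ i → k ≠ i1 → a' k = a k)
    (he'i : e' i = (r i)⁻¹ *ᵥ e i1)
    (he'i1 : e' i1 = e i)
    (ha'i : a' i = a i1 ᵥ* r i)
    (ha'i1 : a' i1 = a i) :
    (∀ j k, j ≠ i → j ≠ i1 → k ≠ i → k ≠ i1 → a' j ⬝ᵥ e' k = a j ⬝ᵥ e k) ∧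
    a' i ⬝ᵥ e' i = a i1 ⬝ᵥ e i1 ∧
    a' i1 ⬝ᵥ e' i1 = a i ⬝ᵥ e i ∧
    a' i ⬝ᵥ e' i1 = (1 + a i ⬝ᵥ e i) * (a i1 ⬝ᵥ e i) ∧
    a' i1 ⬝ᵥ e' i = (a i ⬝ᵥ e i1) / (1 + a i ⬝ᵥ e i) ∧
    (∀ j, j ≠ i → j ≠ i1 →
      a' i ⬝ᵥ e' j = a i1 ⬝ᵥ e j + (a i1 ⬝ᵥ e i) * (a i ⬝ᵥ e j) ∧
      a' j ⬝ᵥ e' i = a j ⬝ᵥ e i1 - (a j ⬝ᵥ e i) * (a i ⬝ᵥ e i1) / (1 + a i ⬝ᵥ e i) ∧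
      a' i1 ⬝ᵥ e' j = a i ⬝ᵥ e j ∧
      a' j ⬝ᵥ e' i1 = a j ⬝ᵥ e i) := by
  set t2 : ℂ := 1 + a i ⬝ᵥ e i with ht2
  -- explicit inverse of r i
  have hinv : (r i)⁻¹ = 1 - t2⁻¹ • vecMulVec (e i) (a i) := by
    apply Matrix.inv_eq_right_inv
    rw [hr i]
    have key : vecMulVec (e i) (a i) * (t2⁻¹ • vecMulVec (e i) (a i))
        = (1 - t2⁻¹) • vecMulVec (e i) (a i) := by
      rw [mul_smul_comm, vecMulVec_mul', smul_smul]
      congr 1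
      field_simp
      rw [ht2]; ring
    rw [mul_sub, mul_one, add_mul, one_mul, key]
    have : t2⁻¹ • vecMulVec (e i) (a i) + (1 - t2⁻¹) • vecMulVec (e i) (a i)
        = vecMulVec (e i) (a i) := by
      rw [← add_smul]; simp
    rw [this, add_sub_cancel_right]
  have hei : e' i = e i1 - (t2⁻¹ * (a i ⬝ᵥ e i1)) • e i := by
    rw [he'i, hinv, Matrix.sub_mulVec, Matrix.one_mulVec, Matrix.smul_mulVec,
      vecMulVec_mulVec', smul_smul]
  have hai : a' i = a i1 + (a i1 ⬝ᵥ e i) • a i := by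
    rw [ha'i, hr i, Matrix.vecMul_add, Matrix.vecMul_one, vecMul_vecMulVec']
  refine ⟨?_, ?_, ?_, ?_, ?_, ?_⟩
  · intro j k hj hj1 hk hk1; rw [he' k hk hk1, ha' j hj hj1]
  · rw [hei, hai]
    simp only [dotProduct_sub, dotProduct_smul, add_dotProduct, smul_dotProduct,
      smul_eq_mul, sub_dotProduct, dotProduct_add]
    field_simp
    ring
  · rw [he'i1, ha'i1]
  · rw [he'i1, hai]
    simp only [add_dotProduct, smul_dotProduct, smul_eq_mul]
    ring
  · rw [hei, ha'i1]
    simp only [dotProduct_sub, dotProduct_smul, smul_eq_mul]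
    field_simp
    ring
  · intro j hj hj1
    refine ⟨?_, ?_, ?_, ?_⟩
    · rw [he' j hj hj1, hai]
      simp only [add_dotProduct, smul_dotProduct, smul_eq_mul]
    · rw [hei, ha' j hj hj1]
      simp only [dotProduct_sub, dotProduct_smul, smul_eq_mul]
      field_simp
    · rw [he' j hj hj1, ha'i1]
    · rw [he'i1, ha' j hj hj1]
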